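/- Let p, d ∈ ℕ and m_ξ > 0. Let G ∈ ℝ^{pd×pd} be symmetric with smallest eigenvalue Λ_min(G) ≥ 2πm_ξ, let g ∈ ℝ^{pd×p}, and set β := G^{−1}g. Let Ĝ ∈ ℝ^{pd×pd} be symmetric positive semi-definite and ĝ ∈ ℝ^{pd×p} satisfy |Ĝ − G|_∞ ≤ δ and |ĝ − g|_∞ ≤ δ for some δ > 0. Let s_{0,j} := |{i : β_{ij} ≠ 0}|, s_in := max_{1≤j≤p} s_{0,j}, and assume s_in δ ≤ πm_ξ/16. Let λ ≥ 4(‖β‖_1 + 1)δ and let β̂ be any global minimizer over M ∈ ℝ^{pd×p} of tr(M^⊤ĜM − 2M^⊤ĝ) + λ|M|_1. Then max_{1≤j≤p} |β̂_{·j} − β_{·j}|_2 ≤ 6√(s_in) λ/(πm_ξ), max_{1≤j≤p} |β̂_{·j} − β_{·j}|_1 ≤ 24 s_in λ/(πm_ξ), and max_{1≤j≤p} |β̂_{·j} − β_{·j}|_∞ ≤ min(4‖G^{−1}‖_1 λ, 6√(s_in) λ/(πm_ξ)). -/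

import Mathlib

open Matrix
open scoped Classical

/-- Maximum absolute column-sum norm `‖M‖₁ = max_j ∑_i |M i j|`. -/
noncomputable def colOneNorm {a b : ℕ} (M : Matrix (Fin a) (Fin b) ℝ) : ℝ :=
  ⨆ j : Fin b, ∑ i, |M i j|

/-- Maximum number of nonzero entries in a column, `s_in = max_j |{i : β i j ≠ 0}|`. -/
noncomputable def maxColSupport {a b : ℕ} (β : Matrix (Fin a) (Fin b) ℝ) : ℕ :=
  Finset.univ.sup fun j : Fin b => (Finset.univ.filter fun i : Fin a => β i j ≠ 0).card

lemma dot_symm {n : ℕ} {A : Matrix (Fin n) (Fin n) ℝ} (hs : ∀ i j, A i j = A j i)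
    (x y : Fin n → ℝ) : x ⬝ᵥ (A *ᵥ y) = y ⬝ᵥ (A *ᵥ x) := by
  simp only [dotProduct, mulVec, Finset.mul_sum]
  rw [Finset.sum_comm]
  refine Finset.sum_congr rfl fun i _ => Finset.sum_congr rfl fun k _ => ?_
  rw [hs k i]; ring

lemma abs_dot_le {n : ℕ} {A : Matrix (Fin n) (Fin n) ℝ} {δ : ℝ} (hδ : 0 ≤ δ)
    (hA : ∀ i j, |A i j| ≤ δ) (x y : Fin n → ℝ) :
    |x ⬝ᵥ (A *ᵥ y)| ≤ δ * (∑ i, |x i|) * (∑ i, |y i|) := by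
  calc |x ⬝ᵥ (A *ᵥ y)| ≤ ∑ i, |x i * (A *ᵥ y) i| := Finset.abs_sum_le_sum_abs _ _
    _ ≤ ∑ i, |x i| * (δ * ∑ k, |y k|) := by
        refine Finset.sum_le_sum fun i _ => ?_
        rw [abs_mul]
        refine mul_le_mul_of_nonneg_left ?_ (abs_nonneg _)
        have : (A *ᵥ y) i = ∑ k, A i k * y k := rfl
        rw [this]
        calc |∑ k, A i k * y k| ≤ ∑ k, |A i k * y k| := Finset.abs_sum_le_sum_abs _ _
          _ ≤ ∑ k, δ * |y k| := by
              refine Finset.sum_le_sum fun k _ => ?_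
              rw [abs_mul]
              exact mul_le_mul_of_nonneg_right (hA i k) (abs_nonneg _)
          _ = δ * ∑ k, |y k| := by rw [Finset.mul_sum]
    _ = δ * (∑ i, |x i|) * (∑ i, |y i|) := by rw [← Finset.sum_mul]; ring

lemma quad_lower {n : ℕ} {c : ℝ} {G : Matrix (Fin n) (Fin n) ℝ} (hG : G.IsHermitian)
    (heig : ∀ i, c ≤ hG.eigenvalues i) (v : Fin n → ℝ) :
    c * ∑ i, v i ^ 2 ≤ v ⬝ᵥ (G *ᵥ v) := by
  classical
  set U : Matrix (Fin n) (Fin n) ℝ := (hG.eigenvectorUnitary : Matrix (Fin n) (Fin n) ℝ) with hU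
  have hUU : U * star U = 1 := mem_unitaryGroup_iff.mp hG.eigenvectorUnitary.2
  have key : G - c • 1 = U * diagonal (fun i => hG.eigenvalues i - c) * star U := by
    have hd : diagonal (fun i => hG.eigenvalues i - c)
        = diagonal (RCLike.ofReal ∘ hG.eigenvalues) - c • (1 : Matrix (Fin n) (Fin n) ℝ) := by
      ext i j
      by_cases h : i = j <;> simp [diagonal, Matrix.one_apply, h]
    rw [hd, Matrix.mul_sub, Matrix.sub_mul,
      show U * diagonal (RCLike.ofReal ∘ hG.eigenvalues) * star U = G from hG.spectral_theorem.symm]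
    congr 1
    rw [Matrix.mul_smul, Matrix.mul_one, Matrix.smul_mul, hUU]
  have hps : (G - c • 1).PosSemidef := by
    rw [key]
    have hd : (diagonal (fun i => hG.eigenvalues i - c)).PosSemidef :=
      posSemidef_diagonal_iff.mpr fun i => sub_nonneg.mpr (heig i)
    simpa [Matrix.star_eq_conjTranspose] using hd.mul_mul_conjTranspose_same U
  have h2 := hps.dotProduct_mulVec_nonneg v
  rw [star_trivial] at h2
  have h3 : v ⬝ᵥ ((G - c • 1) *ᵥ v) = v ⬝ᵥ (G *ᵥ v) - c * ∑ i, v i ^ 2 := by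
    rw [Matrix.sub_mulVec, dotProduct_sub]
    congr 1
    rw [Matrix.smul_mulVec, Matrix.one_mulVec, dotProduct_smul]
    simp [dotProduct, pow_two]
  rw [h3] at h2
  linarith

lemma dot_e {n : ℕ} (i : Fin n) (t : ℝ) (z : Fin n → ℝ) :
    (fun k => if k = i then t else 0) ⬝ᵥ z = t * z i := by
  simp [dotProduct, ite_mul, Finset.sum_ite_eq']

lemma mulVec_e {n : ℕ} (A : Matrix (Fin n) (Fin n) ℝ) (i : Fin n) (t : ℝ) (k : Fin n) :
    (A *ᵥ fun m => if m = i then t else 0) k = A k i * t := by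
  simp [Matrix.mulVec, dotProduct, mul_ite, Finset.sum_ite_eq']

/-- Column objective `Ψ(w) = wᵀĜw - 2⟨w, ĝ⟩ + λ|w|₁`. -/
noncomputable def Psi {n : ℕ} (Ghat : Matrix (Fin n) (Fin n) ℝ) (gcol : Fin n → ℝ)
    (lam : ℝ) (w : Fin n → ℝ) : ℝ :=
  w ⬝ᵥ (Ghat *ᵥ w) - 2 * (∑ i, w i * gcol i) + lam * ∑ i, |w i|

lemma kkt_aux {aG r lam x : ℝ} (haG : 0 ≤ aG) (hlam0 : 0 < lam)
    (key : ∀ t : ℝ, 0 ≤ aG * t ^ 2 + 2 * t * r + lam * (|x + t| - |x|)) :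
    2 * |r| ≤ lam := by
  have key2 : ∀ τ : ℝ, 0 < τ → 2 * |r| ≤ aG * τ + lam := by
    intro τ hτ
    have habs1 : |x + -τ| - |x| ≤ τ := by
      have h := abs_add_le x (-τ)
      rw [abs_neg, abs_of_pos hτ] at h
      linarith
    have habs2 : |x + τ| - |x| ≤ τ := by
      have h := abs_add_le x τ
      rw [abs_of_pos hτ] at h
      linarith
    rcases le_or_gt 0 r with hr | hr
    · have h := key (-τ)
      have h2 : 0 ≤ aG * τ ^ 2 - 2 * τ * |r| + lam * τ := by
        rw [abs_of_nonneg hr]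
        nlinarith [mul_le_mul_of_nonneg_left habs1 hlam0.le]
      have h3 : τ * 0 ≤ τ * (aG * τ - 2 * |r| + lam) := by nlinarith
      have h4 := le_of_mul_le_mul_left h3 hτ
      linarith
    · have h := key τ
      have h2 : 0 ≤ aG * τ ^ 2 - 2 * τ * |r| + lam * τ := by
        rw [abs_of_neg hr]
        nlinarith [mul_le_mul_of_nonneg_left habs2 hlam0.le]
      have h3 : τ * 0 ≤ τ * (aG * τ - 2 * |r| + lam) := by nlinarith
      have h4 := le_of_mul_le_mul_left h3 hτ
      linarith
  have hfor : ∀ ε : ℝ, 0 < ε → 2 * |r| ≤ lam + ε := by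
    intro ε hε
    have hτ : 0 < ε / (aG + 1) := by positivity
    have h9 := key2 _ hτ
    have h10 : aG * (ε / (aG + 1)) ≤ ε := by
      rw [← mul_div_assoc, div_le_iff₀ (by positivity : (0:ℝ) < aG + 1)]
      nlinarith
    linarith
  exact le_of_forall_pos_le_add hfor

set_option maxHeartbeats 2000000 in
lemma col_estimates {n : ℕ} {c δ lam : ℝ} (hc : 0 < c) (hδ : 0 < δ)
    {G Ghat : Matrix (Fin n) (Fin n) ℝ}
    (hqG : ∀ x : Fin n → ℝ, 2 * c * ∑ i, x i ^ 2 ≤ x ⬝ᵥ (G *ᵥ x))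
    (hGhat : Ghat.PosSemidef)
    (hGd : ∀ i k, |Ghat i k - G i k| ≤ δ)
    {u v gcol ghcol : Fin n → ℝ}
    (hGu : ∀ i, (G *ᵥ u) i = gcol i)
    (hgd : ∀ i, |ghcol i - gcol i| ≤ δ)
    {sR bnorm : ℝ}
    (hcard : ((Finset.univ.filter fun i => u i ≠ 0).card : ℝ) ≤ sR)
    (hu1 : ∑ i, |u i| ≤ bnorm) (hbnn : 0 ≤ bnorm)
    (hsin : sR * δ ≤ c / 16)
    (hlam : 4 * (bnorm + 1) * δ ≤ lam)
    (hmin : ∀ w, Psi Ghat ghcol lam v ≤ Psi Ghat ghcol lam w) :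
    Real.sqrt (∑ i, (v i - u i) ^ 2) ≤ 3 / 2 * Real.sqrt sR * lam / c ∧
    (∑ i, |v i - u i|) ≤ 6 * sR * lam / c ∧
    ∀ i, |(G *ᵥ (v - u)) i| ≤ 2 * lam := by
  classical
  have hsGhat : ∀ i k, Ghat i k = Ghat k i := fun i k => by
    have h := hGhat.1.apply k i; rwa [star_trivial] at h
  have hlam0 : 0 < lam := lt_of_lt_of_le (by nlinarith) hlam
  have hsR : 0 ≤ sR := le_trans (Nat.cast_nonneg _) hcard
  set ν : Fin n → ℝ := v - u with hν
  have hνa : ∀ i, ν i = v i - u i := fun i => rfl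
  set S : Finset (Fin n) := Finset.univ.filter (fun i => u i ≠ 0) with hS
  set a := ∑ i ∈ S, |ν i| with ha
  set b := ∑ i ∈ Sᶜ, |ν i| with hb
  have hann : 0 ≤ a := Finset.sum_nonneg fun _ _ => abs_nonneg _
  have hbnn' : 0 ≤ b := Finset.sum_nonneg fun _ _ => abs_nonneg _
  have hab : ∀ (f : Fin n → ℝ), ∑ i ∈ S, f i + ∑ i ∈ Sᶜ, f i = ∑ i, f i :=
    fun f => Finset.sum_add_sum_compl S f
  have habν : a + b = ∑ i, |ν i| := hab fun i => |ν i|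
  set T := ∑ i, ν i ^ 2 with hT
  have hTnn : 0 ≤ T := Finset.sum_nonneg fun _ _ => sq_nonneg _
  -- the noise vector e and its bound
  set e : Fin n → ℝ := fun i => ghcol i - (Ghat *ᵥ u) i with he
  have hE : ∀ i, |e i| ≤ lam / 4 := by
    intro i
    have h1 : e i = (ghcol i - gcol i) - ((Ghat - G) *ᵥ u) i := by
      simp only [he, Matrix.sub_mulVec, Pi.sub_apply, hGu i]; ring
    have h2 : |((Ghat - G) *ᵥ u) i| ≤ δ * bnorm := by
      have h0 : ((Ghat - G) *ᵥ u) i = ∑ k, (Ghat i k - G i k) * u k := rfl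
      rw [h0]
      calc |∑ k, (Ghat i k - G i k) * u k| ≤ ∑ k, |(Ghat i k - G i k) * u k| :=
            Finset.abs_sum_le_sum_abs _ _
        _ ≤ ∑ k, δ * |u k| := Finset.sum_le_sum fun k _ => by
            rw [abs_mul]; exact mul_le_mul_of_nonneg_right (hGd i k) (abs_nonneg _)
        _ = δ * ∑ k, |u k| := (Finset.mul_sum _ _ _).symm
        _ ≤ δ * bnorm := mul_le_mul_of_nonneg_left hu1 hδ.le
    rw [h1]
    calc |(ghcol i - gcol i) - ((Ghat - G) *ᵥ u) i|
        ≤ |ghcol i - gcol i| + |((Ghat - G) *ᵥ u) i| := abs_sub _ _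
      _ ≤ δ + δ * bnorm := add_le_add (hgd i) h2
      _ ≤ lam / 4 := by nlinarith
  -- basic inequality
  have hmin_u := hmin u
  simp only [Psi] at hmin_u
  have hexp : ν ⬝ᵥ (Ghat *ᵥ ν)
      = v ⬝ᵥ (Ghat *ᵥ v) - 2 * (v ⬝ᵥ (Ghat *ᵥ u)) + u ⬝ᵥ (Ghat *ᵥ u) := by
    rw [hν, Matrix.mulVec_sub, dotProduct_sub, sub_dotProduct, sub_dotProduct,
      dot_symm hsGhat u v]
    ring
  have hedot : ν ⬝ᵥ e = (∑ i, v i * ghcol i) - (∑ i, u i * ghcol i)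
      - (v ⬝ᵥ (Ghat *ᵥ u)) + u ⬝ᵥ (Ghat *ᵥ u) := by
    simp only [dotProduct, he, Pi.sub_apply]
    rw [← Finset.sum_sub_distrib, ← Finset.sum_sub_distrib, ← Finset.sum_add_distrib]
    exact Finset.sum_congr rfl fun i _ => by rw [hνa i]; ring
  have hSu0 : ∀ i ∈ Sᶜ, u i = 0 := fun i hi => by
    simp only [hS, Finset.mem_compl, Finset.mem_filter, Finset.mem_univ, true_and,
      not_not] at hi
    exact hi
  have h1u : ∑ i, |u i| = ∑ i ∈ S, |u i| := by
    rw [← hab fun i => |u i|]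
    have h0 : ∑ i ∈ Sᶜ, |u i| = 0 :=
      Finset.sum_eq_zero fun i hi => by rw [hSu0 i hi, abs_zero]
    rw [h0, add_zero]
  have h2v : ∑ i, |v i| = ∑ i ∈ S, |v i| + b := by
    rw [← hab fun i => |v i|, hb]
    congr 1
    exact Finset.sum_congr rfl fun i hi => by rw [hνa i, hSu0 i hi, sub_zero]
  have hsplit : (∑ i, |u i|) - ∑ i, |v i| ≤ a - b := by
    rw [h1u, h2v, ha]
    have h0 : ∑ i ∈ S, |u i| - ∑ i ∈ S, |v i| ≤ ∑ i ∈ S, |ν i| := by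
      rw [← Finset.sum_sub_distrib]
      refine Finset.sum_le_sum fun i _ => ?_
      rw [hνa i]
      calc |u i| - |v i| ≤ |u i - v i| := abs_sub_abs_le_abs_sub _ _
        _ = |v i - u i| := abs_sub_comm _ _
    linarith
  have hQν : (0:ℝ) ≤ ν ⬝ᵥ (Ghat *ᵥ ν) := by
    have h := hGhat.dotProduct_mulVec_nonneg ν; rwa [star_trivial] at h
  have hνdot : |ν ⬝ᵥ e| ≤ lam / 4 * (a + b) := by
    rw [habν]
    calc |ν ⬝ᵥ e| ≤ ∑ i, |ν i * e i| := Finset.abs_sum_le_sum_abs _ _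
      _ ≤ ∑ i, |ν i| * (lam / 4) := Finset.sum_le_sum fun i _ => by
          rw [abs_mul]; exact mul_le_mul_of_nonneg_left (hE i) (abs_nonneg _)
      _ = lam / 4 * ∑ i, |ν i| := by rw [← Finset.sum_mul]; ring
  have hbasic : ν ⬝ᵥ (Ghat *ᵥ ν)
      ≤ 2 * (ν ⬝ᵥ e) + lam * ((∑ i, |u i|) - ∑ i, |v i|) := by
    rw [hexp, hedot]; nlinarith [hmin_u]
  have hup : ν ⬝ᵥ (Ghat *ᵥ ν) ≤ 3 / 2 * lam * a - 1 / 2 * lam * b := by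
    have h3 := mul_le_mul_of_nonneg_left hsplit hlam0.le
    have h4 := le_trans (le_abs_self _) hνdot
    linarith
  have hcone : b ≤ 3 * a := by
    by_contra hcon
    push_neg at hcon
    have h0 := mul_pos hlam0 (sub_pos.mpr hcon)
    nlinarith [hQν, hup]
  have hCS : a ^ 2 ≤ sR * T := by
    have h5 := Finset.sum_mul_sq_le_sq_mul_sq S (fun _ => (1:ℝ)) (fun i => |ν i|)
    simp only [one_mul, one_pow, Finset.sum_const, nsmul_eq_mul, mul_one, sq_abs] at h5
    have h6 : ∑ i ∈ S, ν i ^ 2 ≤ T :=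
      Finset.sum_le_sum_of_subset_of_nonneg (Finset.subset_univ S)
        fun i _ _ => sq_nonneg _
    have h7 : (S.card : ℝ) * (∑ i ∈ S, ν i ^ 2) ≤ sR * T :=
      mul_le_mul hcard h6 (Finset.sum_nonneg fun i _ => sq_nonneg (ν i)) hsR
    exact le_trans h5 h7
  have hQup : ν ⬝ᵥ (Ghat *ᵥ ν) ≤ 3 / 2 * lam * a := by nlinarith [hup, hbnn', hlam0]
  -- lower bound on quadratic form
  have hlow : c * T ≤ ν ⬝ᵥ (Ghat *ᵥ ν) := by
    have q1 := hqG ν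
    have hA : ∀ i k, |(Ghat - G) i k| ≤ δ := fun i k => hGd i k
    have q2 : |ν ⬝ᵥ ((Ghat - G) *ᵥ ν)| ≤ δ * (∑ i, |ν i|) * (∑ i, |ν i|) :=
      abs_dot_le hδ.le hA ν ν
    rw [← habν] at q2
    have q3 : ν ⬝ᵥ (Ghat *ᵥ ν) = ν ⬝ᵥ (G *ᵥ ν) + ν ⬝ᵥ ((Ghat - G) *ᵥ ν) := by
      rw [Matrix.sub_mulVec, dotProduct_sub]; ring
    have q4 : (a + b) ^ 2 ≤ 16 * (sR * T) := by
      nlinarith [hCS, mul_nonneg (by linarith : (0:ℝ) ≤ 3 * a - b)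
        (by linarith : (0:ℝ) ≤ 5 * a + b)]
    have q5 : δ * (a + b) * (a + b) ≤ c * T := by
      have q6 : δ * ((a + b) ^ 2) ≤ δ * (16 * (sR * T)) :=
        mul_le_mul_of_nonneg_left q4 hδ.le
      have q7 : sR * δ * T ≤ c / 16 * T := mul_le_mul_of_nonneg_right hsin hTnn
      nlinarith
    have q8 := neg_abs_le (ν ⬝ᵥ ((Ghat - G) *ᵥ ν))
    rw [q3]
    linarith
  set N := Real.sqrt T with hNdef
  have hNnn : 0 ≤ N := Real.sqrt_nonneg _
  have hN2 : N ^ 2 = T := Real.sq_sqrt hTnn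
  have haN : a ≤ Real.sqrt sR * N := by
    calc a = Real.sqrt (a ^ 2) := (Real.sqrt_sq hann).symm
      _ ≤ Real.sqrt (sR * T) := Real.sqrt_le_sqrt hCS
      _ = Real.sqrt sR * N := Real.sqrt_mul hsR T
  have hNfin : N ≤ 3 / 2 * Real.sqrt sR * lam / c := by
    rcases eq_or_lt_of_le hNnn with h0 | hNpos
    · rw [← h0]; positivity
    · have h6 : (c * N) * N ≤ (3 / 2 * Real.sqrt sR * lam) * N := by
        have h7 : c * T ≤ 3 / 2 * lam * (Real.sqrt sR * N) := by
          nlinarith [mul_le_mul_of_nonneg_left haN (by positivity : (0:ℝ) ≤ 3 / 2 * lam)]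
        nlinarith [hN2]
      have h8 := le_of_mul_le_mul_right h6 hNpos
      rw [le_div_iff₀ hc]
      linarith
  have hl1 : (∑ i, |ν i|) ≤ 6 * sR * lam / c := by
    have h9 : a + b ≤ 4 * (Real.sqrt sR * N) := by nlinarith [haN, hcone]
    have h10 : 4 * (Real.sqrt sR * N) ≤ 4 * (Real.sqrt sR * (3 / 2 * Real.sqrt sR * lam / c)) := by
      have := mul_le_mul_of_nonneg_left hNfin (Real.sqrt_nonneg sR)
      linarith
    have hss : Real.sqrt sR * Real.sqrt sR = sR := Real.mul_self_sqrt hsR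
    have h11 : 4 * (Real.sqrt sR * (3 / 2 * Real.sqrt sR * lam / c)) = 6 * sR * lam / c := by
      linear_combination (6 * lam / c) * hss
    rw [← habν]
    linarith
  refine ⟨hNfin, hl1, ?_⟩
  -- KKT residual bound
  have hKKT : ∀ i, |(Ghat *ᵥ v) i - ghcol i| ≤ lam / 2 := by
    intro i
    set aG := Ghat i i with haGdef
    set r := (Ghat *ᵥ v) i - ghcol i with hrdef
    have haG : 0 ≤ aG := by
      have h := hGhat.dotProduct_mulVec_nonneg (fun k => if k = i then (1:ℝ) else 0)
      rw [star_trivial, dot_e] at h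
      rw [mulVec_e] at h
      simpa using h
    have key : ∀ t : ℝ, 0 ≤ aG * t ^ 2 + 2 * t * r + lam * (|v i + t| - |v i|) := by
      intro t
      have h := hmin (fun k => v k + if k = i then t else 0)
      simp only [Psi] at h
      have hsum : (fun k => v k + if k = i then t else 0)
          = v + (fun k => if k = i then t else 0) := by
        funext k; simp [Pi.add_apply]
      have hQ : (fun k => v k + if k = i then t else 0) ⬝ᵥ
          (Ghat *ᵥ fun k => v k + if k = i then t else 0)
          = v ⬝ᵥ (Ghat *ᵥ v) + 2 * t * ((Ghat *ᵥ v) i) + aG * t ^ 2 := by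
        rw [hsum, Matrix.mulVec_add, dotProduct_add, add_dotProduct, add_dotProduct,
          dot_symm hsGhat v (fun k => if k = i then t else 0), dot_e, dot_e]
        have hee : ((Ghat *ᵥ fun m => if m = i then t else 0) i) = Ghat i i * t := mulVec_e _ _ _ _
        rw [hee, haGdef]
        ring
      have hL : ∑ k, (v k + if k = i then t else 0) * ghcol k
          = (∑ k, v k * ghcol k) + t * ghcol i := by
        simp only [add_mul]
        rw [Finset.sum_add_distrib]
        congr 1
        simpa [dotProduct] using dot_e i t ghcol
      have hAb : ∑ k, |v k + if k = i then t else 0|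
          = (∑ k, |v k|) - |v i| + |v i + t| := by
        have hsp : ∀ (f : Fin n → ℝ), ∑ k, f k = f i + ∑ k ∈ Finset.univ.erase i, f k :=
          fun f => (Finset.add_sum_erase _ f (Finset.mem_univ i)).symm
        rw [hsp (fun k => |v k + if k = i then t else 0|), hsp (fun k => |v k|)]
        have he1 : ∑ k ∈ Finset.univ.erase i, |v k + if k = i then t else 0|
            = ∑ k ∈ Finset.univ.erase i, |v k| :=
          Finset.sum_congr rfl fun k hk => by
            rw [if_neg (Finset.ne_of_mem_erase hk), add_zero]
        rw [he1]
        norm_num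
        ring
      rw [hQ, hL, hAb] at h
      rw [hrdef]
      linarith
    have := kkt_aux haG hlam0 key
    linarith
  -- assemble residual bound
  have hδν : δ * (∑ i, |ν i|) ≤ 3 / 8 * lam := by
    have h7 := mul_le_mul_of_nonneg_left hl1 hδ.le
    have h9 : sR * δ * (6 * lam / c) ≤ c / 16 * (6 * lam / c) :=
      mul_le_mul_of_nonneg_right hsin (by positivity)
    have h10 : c / 16 * (6 * lam / c) = 3 / 8 * lam := by field_simp; ring
    have h8 : δ * (6 * sR * lam / c) = sR * δ * (6 * lam / c) := by ring
    linarith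
  intro i
  have hid : (G *ᵥ (v - u)) i = ((G - Ghat) *ᵥ ν) i + ((Ghat *ᵥ v) i - ghcol i) + e i := by
    rw [hν]
    simp only [Matrix.sub_mulVec, Matrix.mulVec_sub, Pi.sub_apply, he]
    ring
  have h1 : |((G - Ghat) *ᵥ ν) i| ≤ δ * ∑ k, |ν k| := by
    have h0 : ((G - Ghat) *ᵥ ν) i = ∑ k, (G i k - Ghat i k) * ν k := rfl
    rw [h0]
    calc |∑ k, (G i k - Ghat i k) * ν k| ≤ ∑ k, |(G i k - Ghat i k) * ν k| :=
          Finset.abs_sum_le_sum_abs _ _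
      _ ≤ ∑ k, δ * |ν k| := Finset.sum_le_sum fun k _ => by
          rw [abs_mul, abs_sub_comm]
          exact mul_le_mul_of_nonneg_right (hGd i k) (abs_nonneg _)
      _ = δ * ∑ k, |ν k| := (Finset.mul_sum _ _ _).symm
  rw [hid]
  calc |((G - Ghat) *ᵥ ν) i + ((Ghat *ᵥ v) i - ghcol i) + e i|
      ≤ |((G - Ghat) *ᵥ ν) i + ((Ghat *ᵥ v) i - ghcol i)| + |e i| := abs_add_le _ _
    _ ≤ |((G - Ghat) *ᵥ ν) i| + |(Ghat *ᵥ v) i - ghcol i| + |e i| := by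
        linarith [abs_add_le (((G - Ghat) *ᵥ ν) i) ((Ghat *ᵥ v) i - ghcol i)]
    _ ≤ 3 / 8 * lam + lam / 2 + lam / 4 := by
        have := hKKT i
        have := hE i
        linarith [h1, hδν]
    _ ≤ 2 * lam := by linarith


lemma trace_quad {n q : ℕ} (A : Matrix (Fin n) (Fin n) ℝ) (M : Matrix (Fin n) (Fin q) ℝ) :
    Matrix.trace (Mᵀ * A * M) = ∑ j, (fun i => M i j) ⬝ᵥ (A *ᵥ fun i => M i j) := by
  simp only [Matrix.trace, Matrix.diag, Matrix.mul_apply, Matrix.transpose_apply,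
    dotProduct, Matrix.mulVec, Finset.sum_mul, Finset.mul_sum]
  refine Finset.sum_congr rfl fun j _ => ?_
  rw [Finset.sum_comm]
  exact Finset.sum_congr rfl fun i _ => Finset.sum_congr rfl fun k _ => by ring

lemma trace_lin {n q : ℕ} (g M : Matrix (Fin n) (Fin q) ℝ) :
    Matrix.trace (Mᵀ * g) = ∑ j, ∑ i, M i j * g i j := by
  simp only [Matrix.trace, Matrix.diag, Matrix.mul_apply, Matrix.transpose_apply]

lemma col_min {n q : ℕ} (Ghat : Matrix (Fin n) (Fin n) ℝ)
    (ghat βhat : Matrix (Fin n) (Fin q) ℝ) (lam : ℝ)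
    (hmin : ∀ M : Matrix (Fin n) (Fin q) ℝ,
      Matrix.trace (βhatᵀ * Ghat * βhat) - 2 * Matrix.trace (βhatᵀ * ghat) +
          lam * ∑ i, ∑ j, |βhat i j| ≤
        Matrix.trace (Mᵀ * Ghat * M) - 2 * Matrix.trace (Mᵀ * ghat) +
          lam * ∑ i, ∑ j, |M i j|)
    (j : Fin q) (w : Fin n → ℝ) :
    Psi Ghat (fun i => ghat i j) lam (fun i => βhat i j)
      ≤ Psi Ghat (fun i => ghat i j) lam w := by
  classical
  have hobj : ∀ M : Matrix (Fin n) (Fin q) ℝ,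
      Matrix.trace (Mᵀ * Ghat * M) - 2 * Matrix.trace (Mᵀ * ghat)
          + lam * ∑ i, ∑ j', |M i j'|
        = ∑ j', Psi Ghat (fun i => ghat i j') lam (fun i => M i j') := by
    intro M
    rw [trace_quad, trace_lin]
    rw [show (∑ i, ∑ j', |M i j'|) = ∑ j', ∑ i, |M i j'| from Finset.sum_comm]
    simp only [Psi, Finset.sum_add_distrib, Finset.sum_sub_distrib, ← Finset.mul_sum]
  have h := hmin (Matrix.updateCol βhat j w)
  rw [hobj, hobj] at h
  have hsp : ∀ (f : Fin q → ℝ), ∑ j', f j' = f j + ∑ j' ∈ Finset.univ.erase j, f j' :=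
    fun f => (Finset.add_sum_erase _ f (Finset.mem_univ j)).symm
  rw [hsp (fun j' => Psi Ghat (fun i => ghat i j') lam (fun i => βhat i j')),
    hsp (fun j' => Psi Ghat (fun i => ghat i j') lam
      (fun i => Matrix.updateCol βhat j w i j'))] at h
  have hcolj : (fun i => Matrix.updateCol βhat j w i j) = w := by
    funext i; simp [Matrix.updateCol_apply]
  have heq : ∑ j' ∈ Finset.univ.erase j, Psi Ghat (fun i => ghat i j') lam
        (fun i => Matrix.updateCol βhat j w i j')
      = ∑ j' ∈ Finset.univ.erase j, Psi Ghat (fun i => ghat i j') lam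
        (fun i => βhat i j') := by
    refine Finset.sum_congr rfl fun j' hj' => ?_
    congr 1
    funext i
    rw [Matrix.updateCol_apply, if_neg (Finset.ne_of_mem_erase hj')]
  rw [hcolj, heq] at h
  linarith

theorem stmt8 (p d : ℕ) (mxi δ lam : ℝ) (hmxi : 0 < mxi) (hδ : 0 < δ)
    (G : Matrix (Fin (p * d)) (Fin (p * d)) ℝ) (hG : G.IsHermitian)
    (heig : ∀ i, 2 * Real.pi * mxi ≤ hG.eigenvalues i)
    (g β : Matrix (Fin (p * d)) (Fin p) ℝ) (hβ : β = G⁻¹ * g)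
    (Ghat : Matrix (Fin (p * d)) (Fin (p * d)) ℝ) (hGhat : Ghat.PosSemidef)
    (ghat : Matrix (Fin (p * d)) (Fin p) ℝ)
    (hGd : ∀ i j, |Ghat i j - G i j| ≤ δ) (hgd : ∀ i j, |ghat i j - g i j| ≤ δ)
    (hsin : (maxColSupport β : ℝ) * δ ≤ Real.pi * mxi / 16)
    (hlam : 4 * (colOneNorm β + 1) * δ ≤ lam)
    (βhat : Matrix (Fin (p * d)) (Fin p) ℝ)
    (hmin : ∀ M : Matrix (Fin (p * d)) (Fin p) ℝ,
      Matrix.trace (βhatᵀ * Ghat * βhat) - 2 * Matrix.trace (βhatᵀ * ghat) +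
          lam * ∑ i, ∑ j, |βhat i j| ≤
        Matrix.trace (Mᵀ * Ghat * M) - 2 * Matrix.trace (Mᵀ * ghat) +
          lam * ∑ i, ∑ j, |M i j|) :
    (∀ j, Real.sqrt (∑ i, (βhat i j - β i j) ^ 2) ≤
        6 * Real.sqrt (maxColSupport β) * lam / (Real.pi * mxi)) ∧
    (∀ j, (∑ i, |βhat i j - β i j|) ≤
        24 * (maxColSupport β : ℝ) * lam / (Real.pi * mxi)) ∧
    (∀ i j, |βhat i j - β i j| ≤
        min (4 * colOneNorm G⁻¹ * lam)
          (6 * Real.sqrt (maxColSupport β) * lam / (Real.pi * mxi))) := by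
  classical
  have hpi : 0 < Real.pi := Real.pi_pos
  have hc : 0 < Real.pi * mxi := mul_pos hpi hmxi
  have hsG : ∀ i k, G i k = G k i := fun i k => by
    have h := hG.apply k i; rwa [star_trivial] at h
  have hqG : ∀ x : Fin (p*d) → ℝ, 2 * (Real.pi * mxi) * ∑ i, x i ^ 2 ≤ x ⬝ᵥ (G *ᵥ x) := by
    intro x
    have h := quad_lower hG heig x
    calc 2 * (Real.pi * mxi) * ∑ i, x i ^ 2 = 2 * Real.pi * mxi * ∑ i, x i ^ 2 := by ring
      _ ≤ _ := h
  have hPD : G.PosDef := by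
    refine .of_dotProduct_mulVec_pos hG fun x hx => ?_
    rw [star_trivial]
    have h1 := hqG x
    have h2 : 0 < ∑ i, x i ^ 2 := by
      obtain ⟨i, hi⟩ := Function.ne_iff.mp hx
      exact Finset.sum_pos' (fun k _ => sq_nonneg _) ⟨i, Finset.mem_univ i, pow_two_pos_of_ne_zero hi⟩
    nlinarith
  have hdet : IsUnit G.det := hPD.det_pos.ne'.isUnit
  have hGinvG : G⁻¹ * G = 1 := Matrix.nonsing_inv_mul G hdet
  have hGg : G * β = g := by
    rw [hβ, ← Matrix.mul_assoc, Matrix.mul_nonsing_inv G hdet, Matrix.one_mul]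
  have hGu : ∀ (j : Fin p) (i : Fin (p*d)), (G *ᵥ fun k => β k j) i = g i j := by
    intro j i
    have h := congrFun (congrFun hGg i) j
    simpa [Matrix.mul_apply, Matrix.mulVec, dotProduct] using h
  have hGT : Gᵀ = G := by
    ext i k; exact hsG k i
  have hsGinv : ∀ i k, G⁻¹ i k = G⁻¹ k i := by
    have h : G⁻¹ᵀ = G⁻¹ := by rw [Matrix.transpose_nonsing_inv, hGT]
    intro i k
    conv_lhs => rw [← h]
    rfl
  have hcolβ : ∀ j : Fin p, ∑ i, |β i j| ≤ colOneNorm β := fun j => by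
    exact le_ciSup (f := fun j' : Fin p => ∑ i, |β i j'|)
      (Set.Finite.bddAbove (Set.finite_range _)) j
  have hcolGinv : ∀ k, ∑ i, |G⁻¹ i k| ≤ colOneNorm G⁻¹ := fun k => by
    exact le_ciSup (f := fun k' : Fin (p * d) => ∑ i, |G⁻¹ i k'|)
      (Set.Finite.bddAbove (Set.finite_range _)) k
  have hcard : ∀ j : Fin p, ((Finset.univ.filter fun i => β i j ≠ 0).card : ℝ)
      ≤ (maxColSupport β : ℝ) := fun j =>
    Nat.cast_le.mpr (Finset.le_sup (f := fun j' : Fin p => (Finset.univ.filter fun i => β i j' ≠ 0).card) (Finset.mem_univ j))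
  have hsnn : (0:ℝ) ≤ (maxColSupport β : ℝ) := Nat.cast_nonneg _
  have hlam0 : Fin p → 0 < lam := fun j => by
    have hbnn : 0 ≤ colOneNorm β :=
      le_trans (Finset.sum_nonneg fun i _ => abs_nonneg _) (hcolβ j)
    exact lt_of_lt_of_le (by nlinarith) hlam
  have hmain : ∀ j : Fin p,
      Real.sqrt (∑ i, ((fun k => βhat k j) i - (fun k => β k j) i) ^ 2)
          ≤ 3 / 2 * Real.sqrt (maxColSupport β) * lam / (Real.pi * mxi) ∧
        (∑ i, |(fun k => βhat k j) i - (fun k => β k j) i|)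
          ≤ 6 * (maxColSupport β : ℝ) * lam / (Real.pi * mxi) ∧
        ∀ i, |(G *ᵥ ((fun k => βhat k j) - fun k => β k j)) i| ≤ 2 * lam := by
    intro j
    have hbnn : 0 ≤ colOneNorm β :=
      le_trans (Finset.sum_nonneg fun i _ => abs_nonneg _) (hcolβ j)
    exact col_estimates hc hδ hqG hGhat (fun i k => hGd i k)
      (hGu j) (fun i => hgd i j) (hcard j) (hcolβ j) hbnn
      (by linarith [hsin]) hlam (col_min Ghat ghat βhat lam hmin j)
  have hcoef : ∀ j : Fin p, 3 / 2 * Real.sqrt (maxColSupport β) * lam / (Real.pi * mxi)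
      ≤ 6 * Real.sqrt (maxColSupport β) * lam / (Real.pi * mxi) := fun j => by
    rw [div_le_div_iff_of_pos_right hc]
    nlinarith [Real.sqrt_nonneg ((maxColSupport β : ℝ)), (hlam0 j).le]
  refine ⟨fun j => ?_, fun j => ?_, fun i j => ?_⟩
  · exact le_trans (hmain j).1 (hcoef j)
  · have h2 : 6 * (maxColSupport β : ℝ) * lam / (Real.pi * mxi)
        ≤ 24 * (maxColSupport β : ℝ) * lam / (Real.pi * mxi) := by
      rw [div_le_div_iff_of_pos_right hc]
      nlinarith [hsnn, (hlam0 j).le]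
    exact le_trans (hmain j).2.1 h2
  · refine le_min ?_ ?_
    · -- via G⁻¹
      have hres := (hmain j).2.2
      have hrec : (fun k => βhat k j - β k j)
          = G⁻¹ *ᵥ (G *ᵥ ((fun k => βhat k j) - fun k => β k j)) := by
        rw [Matrix.mulVec_mulVec, hGinvG, Matrix.one_mulVec]
        rfl
      have h0 : |βhat i j - β i j|
          = |(G⁻¹ *ᵥ (G *ᵥ ((fun k => βhat k j) - fun k => β k j))) i| := by
        rw [← hrec]
      rw [h0]
      have h1 : |(G⁻¹ *ᵥ (G *ᵥ ((fun k => βhat k j) - fun k => β k j))) i|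
          ≤ ∑ k, |G⁻¹ i k| * (2 * lam) := by
        have h0' : (G⁻¹ *ᵥ (G *ᵥ ((fun k => βhat k j) - fun k => β k j))) i
            = ∑ k, G⁻¹ i k * (G *ᵥ ((fun k => βhat k j) - fun k => β k j)) k := rfl
        rw [h0']
        calc |∑ k, G⁻¹ i k * (G *ᵥ ((fun k => βhat k j) - fun k => β k j)) k|
            ≤ ∑ k, |G⁻¹ i k * (G *ᵥ ((fun k => βhat k j) - fun k => β k j)) k| :=
              Finset.abs_sum_le_sum_abs _ _
          _ ≤ ∑ k, |G⁻¹ i k| * (2 * lam) := Finset.sum_le_sum fun k _ => by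
              rw [abs_mul]
              exact mul_le_mul_of_nonneg_left (hres k) (abs_nonneg _)
      have h2 : ∑ k, |G⁻¹ i k| * (2 * lam) = 2 * lam * ∑ k, |G⁻¹ k i| := by
        rw [← Finset.sum_mul,
          show (∑ k, |G⁻¹ i k|) = ∑ k, |G⁻¹ k i| from
            Finset.sum_congr rfl fun k _ => by rw [hsGinv i k]]
        ring
      have h3 : ∑ k, |G⁻¹ k i| ≤ colOneNorm G⁻¹ := hcolGinv i
      have hgnn : 0 ≤ colOneNorm G⁻¹ :=
        le_trans (Finset.sum_nonneg fun k _ => abs_nonneg _) h3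
      have h4 := mul_le_mul_of_nonneg_left h3 (by linarith [(hlam0 j).le] : (0:ℝ) ≤ 2 * lam)
      nlinarith [h1, h2, h4, mul_nonneg hgnn (hlam0 j).le]
    · -- via ℓ2
      have hb : (βhat i j - β i j) ^ 2 ≤ ∑ k, (βhat k j - β k j) ^ 2 :=
        Finset.single_le_sum (f := fun k => (βhat k j - β k j) ^ 2) (fun k _ => sq_nonneg _) (Finset.mem_univ i)
      calc |βhat i j - β i j| = Real.sqrt ((βhat i j - β i j) ^ 2) :=
            (Real.sqrt_sq_eq_abs _).symm
        _ ≤ Real.sqrt (∑ k, (βhat k j - β k j) ^ 2) := Real.sqrt_le_sqrt hb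
        _ ≤ 3 / 2 * Real.sqrt (maxColSupport β) * lam / (Real.pi * mxi) := (hmain j).1
        _ ≤ 6 * Real.sqrt (maxColSupport β) * lam / (Real.pi * mxi) := hcoef j
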